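/- For every even natural number k and every integer n there exists a polynomial P of degree at most k such that for every complex number x with sin x ≠ 0, the k-th derivative of z ↦ (sin z)^n (integer power) at x equals (sin x)^(n−k) · P(sin x); and for every odd natural number k and every integer n there exists a polynomial P of degree at most k − 1 such that for every complex number x with sin x ≠ 0, the k-th derivative of z ↦ (sin z)^n at x equals (sin x)^(n−k) · cos x · P(sin x). -/

import Mathlib

open Polynomial

private lemma aux_X_mul_deriv_degree (P : Polynomial ℂ) (m : ℕ) (h : P.degree ≤ (m : WithBot ℕ)) :
    (X * P.derivative).degree ≤ (m : WithBot ℕ) := by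
  rcases eq_or_ne P.derivative 0 with h0 | h0
  · simp [h0]
  have hP : P ≠ 0 := fun hh => h0 (by simp [hh])
  have h1 : P.derivative.degree < (m : WithBot ℕ) :=
    lt_of_lt_of_le (degree_derivative_lt hP) h
  calc (X * P.derivative).degree ≤ 1 + P.derivative.degree := by
        simpa using Polynomial.degree_mul_le X P.derivative
    _ ≤ m := by rw [add_comm]; exact Nat.WithBot.add_one_le_of_lt h1

private lemma sin_eventually_ne {x : ℂ} (hx : Complex.sin x ≠ 0) :
    ∀ᶠ z in nhds x, Complex.sin z ≠ 0 :=
  Complex.continuous_sin.continuousAt.eventually_ne hx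

theorem iteratedDeriv_sin_zpow_exists_poly (k : ℕ) (n : ℤ) :
    (Even k → ∃ P : Polynomial ℂ, P.degree ≤ (k : ℕ) ∧
      ∀ x : ℂ, Complex.sin x ≠ 0 →
        iteratedDeriv k (fun z : ℂ => Complex.sin z ^ n) x =
          Complex.sin x ^ (n - (k : ℤ)) * P.eval (Complex.sin x)) ∧
    (Odd k → ∃ P : Polynomial ℂ, P.degree ≤ (k - 1 : ℕ) ∧
      ∀ x : ℂ, Complex.sin x ≠ 0 →
        iteratedDeriv k (fun z : ℂ => Complex.sin z ^ n) x =
          Complex.sin x ^ (n - (k : ℤ)) * Complex.cos x * P.eval (Complex.sin x)) := by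
  induction k with
  | zero =>
    constructor
    · intro _
      exact ⟨1, by simp, fun x hx => by simp⟩
    · intro h
      exact absurd h (by simp)
  | succ k ih =>
    constructor
    · -- Even (k+1), so Odd k
      intro hek
      have hk : Odd k := by rwa [Nat.even_add_one, Nat.not_even_iff_odd] at hek
      obtain ⟨P, hdeg, hP⟩ := ih.2 hk
      refine ⟨C ((n : ℂ) - k) * ((1 - X ^ 2) * P) - X ^ 2 * P + (1 - X ^ 2) * (X * P.derivative),
        ?_, ?_⟩
      · have h2 : (1 - X ^ 2 : Polynomial ℂ).degree ≤ 2 := by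
          apply le_trans (degree_sub_le _ _)
          simp [degree_X_pow]
        have ha : (C ((n : ℂ) - k) * ((1 - X ^ 2) * P)).degree ≤ ((k + 1 : ℕ) : WithBot ℕ) := by
          apply le_trans (degree_mul_le _ _)
          apply le_trans (add_le_add degree_C_le le_rfl)
          rw [zero_add]
          apply le_trans (degree_mul_le _ _)
          calc (1 - X ^ 2 : Polynomial ℂ).degree + P.degree ≤ 2 + ((k - 1 : ℕ) : WithBot ℕ) :=
                add_le_add h2 hdeg
            _ ≤ ((k + 1 : ℕ) : WithBot ℕ) := by
                have hk1 : 1 ≤ k := hk.pos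
                exact_mod_cast Nat.cast_le.mpr (by omega : 2 + (k - 1) ≤ k + 1)
        have hb : (X ^ 2 * P : Polynomial ℂ).degree ≤ ((k + 1 : ℕ) : WithBot ℕ) := by
          apply le_trans (degree_mul_le _ _)
          calc (X ^ 2 : Polynomial ℂ).degree + P.degree ≤ 2 + ((k - 1 : ℕ) : WithBot ℕ) :=
                add_le_add (by simp [degree_X_pow]) hdeg
            _ ≤ ((k + 1 : ℕ) : WithBot ℕ) := by
                have hk1 : 1 ≤ k := hk.pos
                exact_mod_cast Nat.cast_le.mpr (by omega : 2 + (k - 1) ≤ k + 1)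
        have hc : ((1 - X ^ 2) * (X * P.derivative) : Polynomial ℂ).degree ≤
            ((k + 1 : ℕ) : WithBot ℕ) := by
          apply le_trans (degree_mul_le _ _)
          calc (1 - X ^ 2 : Polynomial ℂ).degree + (X * P.derivative).degree ≤
                2 + ((k - 1 : ℕ) : WithBot ℕ) :=
                add_le_add h2 (aux_X_mul_deriv_degree P _ hdeg)
            _ ≤ ((k + 1 : ℕ) : WithBot ℕ) := by
                have hk1 : 1 ≤ k := hk.pos
                exact_mod_cast Nat.cast_le.mpr (by omega : 2 + (k - 1) ≤ k + 1)
        exact le_trans (degree_add_le _ _) (max_le (le_trans (degree_sub_le _ _) (max_le ha hb)) hc)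
      · intro x hx
        rw [iteratedDeriv_succ]
        have hevq : iteratedDeriv k (fun z : ℂ => Complex.sin z ^ n) =ᶠ[nhds x]
            (fun z => Complex.sin z ^ (n - (k : ℤ)) * Complex.cos z *
              P.eval (Complex.sin z)) := by
          filter_upwards [sin_eventually_ne hx] with z hz using hP z hz
        rw [hevq.deriv_eq]
        have hsin : HasDerivAt Complex.sin (Complex.cos x) x := Complex.hasDerivAt_sin x
        have h1 : HasDerivAt (fun z => Complex.sin z ^ (n - (k : ℤ)))
            (((n - (k : ℤ) : ℤ) : ℂ) * Complex.sin x ^ (n - (k : ℤ) - 1) * Complex.cos x) x :=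
          HasDerivAt.comp x (hasDerivAt_zpow _ _ (Or.inl hx)) hsin
        have h2 : HasDerivAt Complex.cos (-Complex.sin x) x := Complex.hasDerivAt_cos x
        have h3 : HasDerivAt (fun z => P.eval (Complex.sin z))
            (P.derivative.eval (Complex.sin x) * Complex.cos x) x :=
          (P.hasDerivAt _).comp x hsin
        rw [((h1.fun_mul h2).fun_mul h3).deriv]
        have hcast : (n - ((k + 1 : ℕ) : ℤ)) = n - (k : ℤ) - 1 := by push_cast; ring
        have hsp : Complex.sin x ^ (n - (k : ℤ)) =
            Complex.sin x ^ (n - (k : ℤ) - 1) * Complex.sin x := by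
          rw [← zpow_add_one₀ hx]
          congr 1
          ring
        rw [hcast, hsp]
        have htrig : Complex.cos x * Complex.cos x = 1 - Complex.sin x * Complex.sin x := by
          have := Complex.sin_sq_add_cos_sq x
          ring_nf
          ring_nf at this
          linear_combination this
        simp only [eval_add, eval_sub, eval_mul, eval_pow, eval_C, eval_X, eval_one]
        push_cast
        linear_combination (Complex.sin x ^ (n - (k : ℤ) - 1) * ((n : ℂ) - k) *
            P.eval (Complex.sin x) + Complex.sin x ^ (n - (k : ℤ) - 1) * Complex.sin x *
            P.derivative.eval (Complex.sin x)) * htrig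
    · -- Odd (k+1), so Even k
      intro hok
      have hk : Even k := by rwa [Nat.odd_add_one, Nat.not_odd_iff_even] at hok
      obtain ⟨P, hdeg, hP⟩ := ih.1 hk
      refine ⟨C ((n : ℂ) - k) * P + X * P.derivative, ?_, ?_⟩
      · simp only [Nat.add_sub_cancel]
        exact le_trans (degree_add_le _ _)
          (max_le (le_trans (degree_mul_le _ _)
            (by rw [← zero_add ((k : ℕ) : WithBot ℕ)]; exact add_le_add degree_C_le hdeg))
            (aux_X_mul_deriv_degree P k hdeg))
      · intro x hx
        rw [iteratedDeriv_succ]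
        have hevq : iteratedDeriv k (fun z : ℂ => Complex.sin z ^ n) =ᶠ[nhds x]
            (fun z => Complex.sin z ^ (n - (k : ℤ)) * P.eval (Complex.sin z)) := by
          filter_upwards [sin_eventually_ne hx] with z hz using hP z hz
        rw [hevq.deriv_eq]
        have hsin : HasDerivAt Complex.sin (Complex.cos x) x := Complex.hasDerivAt_sin x
        have h1 : HasDerivAt (fun z => Complex.sin z ^ (n - (k : ℤ)))
            (((n - (k : ℤ) : ℤ) : ℂ) * Complex.sin x ^ (n - (k : ℤ) - 1) * Complex.cos x) x :=
          HasDerivAt.comp x (hasDerivAt_zpow _ _ (Or.inl hx)) hsin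
        have h3 : HasDerivAt (fun z => P.eval (Complex.sin z))
            (P.derivative.eval (Complex.sin x) * Complex.cos x) x :=
          (P.hasDerivAt _).comp x hsin
        rw [(h1.fun_mul h3).deriv]
        have hcast : (n - ((k + 1 : ℕ) : ℤ)) = n - (k : ℤ) - 1 := by push_cast; ring
        have hsp : Complex.sin x ^ (n - (k : ℤ)) =
            Complex.sin x ^ (n - (k : ℤ) - 1) * Complex.sin x := by
          rw [← zpow_add_one₀ hx]
          congr 1
          ring
        rw [hcast, hsp]
        simp only [eval_add, eval_mul, eval_C, eval_X]
        push_cast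
        ring
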